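/- arXiv:2409.11761 — 2 statements merged into one kernel-verified Lean document; each statement's English description precedes it below -/
import Mathlib

section
/- Let 0 < λ₁ < λ₂ < … < λ_M be distinct positive real numbers and N > M a positive integer. Set λ₀ = 0. Then for each k ∈ {1,…,M} the equation (1/N)·∑_{j=1}^{M} λ_j/(λ_j − μ) = 1 has exactly one solution μ_k in the open interval (λ_{k−1}, λ_k), and the M numbers μ₁ < μ₂ < … < μ_M obtained this way are all of the real solutions of the equation; in particular 0 < μ₁ < λ₁ < μ₂ < λ₂ < … < μ_M < λ_M. -/
/-- The left endpoint of the `k`-th interval `(λ_{k−1}, λ_k)`, with the convention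
`λ₀ = 0`. -/
def prevEig {M : ℕ} (lam : Fin M → ℝ) (k : Fin M) : ℝ :=
  if _h : (k : ℕ) = 0 then 0
  else lam ⟨(k : ℕ) - 1, Nat.lt_of_le_of_lt (Nat.sub_le _ _) k.isLt⟩

/-- Each term `c/(c-μ)` is strictly increasing in `μ` away from the pole. -/
lemma mestre_term_lt_term {c x y : ℝ} (hc : 0 < c) (hxy : x < y)
    (h : y < c ∨ c < x) : c / (c - x) < c / (c - y) := by
  rcases h with h | h
  · exact div_lt_div_of_pos_left hc (by linarith) (by linarith)
  · rw [show c - x = -(x - c) by ring, show c - y = -(y - c) by ring, div_neg, div_neg]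
    exact neg_lt_neg (div_lt_div_of_pos_left hc (by linarith) (by linarith))

/-- For distinct positive eigenvalues `0 < λ₁ < … < λ_M` and `N > M`, the equation
`(1/N) ∑ⱼ λⱼ/(λⱼ − μ) = 1` has exactly one solution in each interval `(λ_{k−1}, λ_k)`
(with `λ₀ = 0`), and these `M` interlaced solutions are all of its real solutions. -/
theorem mestre_roots (M N : ℕ) (hMN : M < N) (lam : Fin M → ℝ)
    (hpos : ∀ k, 0 < lam k) (hmono : StrictMono lam) :
    (∀ k : Fin M, ∃! μ : ℝ, μ ∈ Set.Ioo (prevEig lam k) (lam k) ∧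
        (1 / (N : ℝ)) * ∑ j, lam j / (lam j - μ) = 1) ∧
      (∀ μ : ℝ, (∀ j, μ ≠ lam j) → (1 / (N : ℝ)) * ∑ j, lam j / (lam j - μ) = 1 →
        ∃ k : Fin M, μ ∈ Set.Ioo (prevEig lam k) (lam k)) := by
  have hNR : (0:ℝ) < N := by
    have : 0 < N := lt_of_le_of_lt (Nat.zero_le M) hMN
    exact_mod_cast this
  constructor
  · -- existence and uniqueness in each interval
    intro k
    set f : ℝ → ℝ := fun μ => (1 / (N : ℝ)) * ∑ j, lam j / (lam j - μ) with hf
    set a := prevEig lam k with ha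
    set b := lam k with hb
    have hb0 : 0 < b := hpos k
    have ha0 : 0 ≤ a := by
      rw [ha, prevEig]
      split
      · exact le_rfl
      · exact (hpos _).le
    have hab : a < b := by
      rw [ha, prevEig]
      split
      · exact hb0
      · rename_i h
        exact hmono (show _ < k by rw [Fin.lt_def]; simp; omega)
    have hside : ∀ j : Fin M, lam j ≤ a ∨ b ≤ lam j := by
      intro j
      rcases lt_or_ge (j:ℕ) (k:ℕ) with h | h
      · left
        have hk0 : ¬ ((k:ℕ) = 0) := by omega
        rw [ha, prevEig, dif_neg hk0]
        exact hmono.monotone (by rw [Fin.le_def]; simp; omega)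
      · right
        exact hmono.monotone (by rwa [Fin.le_def])
    have hne : ∀ μ ∈ Set.Ioo a b, ∀ j : Fin M, lam j - μ ≠ 0 := by
      intro μ hμ j
      rcases hside j with h | h
      · exact ne_of_lt (by linarith [hμ.1])
      · exact ne_of_gt (by linarith [hμ.2])
    have hmonoF : StrictMonoOn f (Set.Ioo a b) := by
      intro x hx y hy hxy
      have hsum : ∑ j, lam j / (lam j - x) < ∑ j, lam j / (lam j - y) := by
        apply Finset.sum_lt_sum_of_nonempty ⟨k, Finset.mem_univ k⟩
        intro j _
        apply mestre_term_lt_term (hpos j) hxy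
        rcases hside j with h | h
        · right; exact lt_of_le_of_lt h hx.1
        · left; exact lt_of_lt_of_le hy.2 h
      exact mul_lt_mul_of_pos_left hsum (by positivity)
    have hcont : ContinuousOn f (Set.Ioo a b) := by
      apply ContinuousOn.mul continuousOn_const
      apply continuousOn_finset_sum
      intro j _
      exact ContinuousOn.div continuousOn_const
        (continuousOn_const.sub continuousOn_id) (fun μ hμ => hne μ hμ j)
    -- the constant bounding the non-singular terms
    obtain ⟨C, hC1, hCkey⟩ : ∃ C : ℝ, 1 ≤ C ∧ b ≤ (C - 1) * ((b - a) / 2) := by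
      have hba : (0:ℝ) < b - a := by linarith
      refine ⟨2 * b / (b - a) + 1, ?_, ?_⟩
      · have h0 : 0 ≤ 2 * b / (b - a) := div_nonneg (by linarith) hba.le
        linarith
      · have : (2 * b / (b - a) + 1 - 1) * ((b - a) / 2) = b := by field_simp; ring
        linarith
    have hC : 0 < C := by linarith
    have hMC : (0:ℝ) ≤ (M:ℝ) * C := mul_nonneg (Nat.cast_nonneg M) hC.le
    -- a point y close to b where f y > 1
    obtain ⟨y, hyI, hfy⟩ : ∃ y ∈ Set.Ioo a b, 1 < f y := by
      set δ := min ((b - a) / 2) (b / ((N:ℝ) + (M:ℝ) * C + 1)) with hδdef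
      have hδ1 : δ ≤ (b - a) / 2 := min_le_left _ _
      have hδ2 : δ ≤ b / ((N:ℝ) + (M:ℝ) * C + 1) := min_le_right _ _
      have hδ0 : 0 < δ := lt_min (by linarith) (div_pos hb0 (by linarith))
      refine ⟨b - δ, ⟨by linarith, by linarith⟩, ?_⟩
      have hsplit : ∑ j, lam j / (lam j - (b - δ))
          = lam k / (lam k - (b - δ)) +
            ∑ j ∈ Finset.univ.erase k, lam j / (lam j - (b - δ)) :=
        (Finset.add_sum_erase _ _ (Finset.mem_univ k)).symm
      have htermk : lam k / (lam k - (b - δ)) = b / δ := by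
        rw [← hb]; ring_nf
      have hrest : ∀ j ∈ Finset.univ.erase k, -C ≤ lam j / (lam j - (b - δ)) := by
        intro j _
        rcases hside j with h | h
        · have hya : (b - a) / 2 ≤ (b - δ) - lam j := by linarith
          have hd : 0 < (b - δ) - lam j := by linarith
          rw [show lam j - (b - δ) = -((b - δ) - lam j) by ring, div_neg,
            neg_le_neg_iff, div_le_iff₀ hd]
          have h1 : (C - 1) * ((b - a) / 2) ≤ (C - 1) * ((b - δ) - lam j) :=
            mul_le_mul_of_nonneg_left hya (by linarith)
          have hexp : C * ((b - δ) - lam j)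
              = ((b - δ) - lam j) + (C - 1) * ((b - δ) - lam j) := by ring
          linarith
        · have hd : 0 < lam j - (b - δ) := by linarith
          have := div_nonneg (hpos j).le hd.le
          linarith
      have hsum_rest : -((M:ℝ) * C)
          ≤ ∑ j ∈ Finset.univ.erase k, lam j / (lam j - (b - δ)) := by
        have h1 := Finset.sum_le_sum hrest
        rw [Finset.sum_const, Finset.card_erase_of_mem (Finset.mem_univ k),
          Finset.card_univ, Fintype.card_fin, nsmul_eq_mul] at h1
        have hcard : ((M - 1 : ℕ) : ℝ) ≤ (M:ℝ) := by
          exact_mod_cast Nat.sub_le M 1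
        have h2 := mul_le_mul_of_nonneg_right hcard hC.le
        linarith
      have hbδ : (N:ℝ) + (M:ℝ) * C + 1 ≤ b / δ := by
        rw [le_div_iff₀ hδ0, mul_comm]
        rw [le_div_iff₀ (by linarith)] at hδ2
        exact hδ2
      have hS : (N:ℝ) < ∑ j, lam j / (lam j - (b - δ)) := by
        rw [hsplit, htermk]; linarith
      show 1 < (1 / (N : ℝ)) * ∑ j, lam j / (lam j - (b - δ))
      rw [div_mul_eq_mul_div, one_mul]
      exact (one_lt_div hNR).mpr hS
    -- a point x close to a where f x < 1
    obtain ⟨x, hxI, hfx⟩ : ∃ x ∈ Set.Ioo a b, f x < 1 := by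
      rcases Nat.eq_zero_or_pos (k:ℕ) with hk0 | hk0
      · -- k = 0 : take x = b/(2M+1)
        have haz : a = 0 := by rw [ha, prevEig, dif_pos hk0]
        have hM1 : 1 ≤ M := Nat.one_le_iff_ne_zero.mpr (by
          rintro rfl; exact absurd k.isLt (by omega))
        have hm : (1:ℝ) ≤ (M:ℝ) := by exact_mod_cast hM1
        set x := b / (2 * (M:ℝ) + 1) with hxdef
        have hx0 : 0 < x := by positivity
        have hxb : x < b := by
          rw [hxdef]
          exact div_lt_self hb0 (by linarith)
        refine ⟨x, ⟨by rw [haz]; exact hx0, hxb⟩, ?_⟩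
        have hbj : ∀ j : Fin M, b ≤ lam j := by
          intro j
          rcases hside j with h | h
          · rw [haz] at h; linarith [hpos j]
          · exact h
        have hterm : ∀ j : Fin M, lam j / (lam j - x) ≤ b / (b - x) := by
          intro j
          have hd : 0 < lam j - x := by linarith [hbj j]
          rw [div_le_div_iff₀ hd (by linarith)]
          nlinarith [hbj j, hx0.le]
        have hsum : ∑ j, lam j / (lam j - x) ≤ (M:ℝ) * (b / (b - x)) := by
          calc ∑ j, lam j / (lam j - x) ≤ ∑ _j : Fin M, b / (b - x) :=
                Finset.sum_le_sum (fun j _ => hterm j)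
            _ = (M:ℝ) * (b / (b - x)) := by
                rw [Finset.sum_const, Finset.card_univ, Fintype.card_fin, nsmul_eq_mul]
        have hval : (M:ℝ) * (b / (b - x)) = (M:ℝ) + 1/2 := by
          have hdne : b - x ≠ 0 := ne_of_gt (by linarith)
          have h2m : (2 * (M:ℝ) + 1) ≠ 0 := by positivity
          rw [hxdef] at hdne ⊢
          rw [show b - b / (2 * (M:ℝ) + 1) = b * (2 * (M:ℝ)) / (2 * (M:ℝ) + 1) by
            field_simp; ring]
          have hMne : (2 * (M:ℝ)) ≠ 0 := by positivity
          have hbne : b ≠ 0 := ne_of_gt hb0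
          field_simp
        have hMN' : (M:ℝ) + 1 ≤ (N:ℝ) := by exact_mod_cast hMN
        have hS : ∑ j, lam j / (lam j - x) < (N:ℝ) := by
          rw [hval] at hsum; linarith
        show (1 / (N : ℝ)) * ∑ j, lam j / (lam j - x) < 1
        rw [div_mul_eq_mul_div, one_mul]
        exact (div_lt_one hNR).mpr hS
      · -- k > 0 : a = lam k' with k' = k-1
        have hklt : (k:ℕ) - 1 < M := Nat.lt_of_le_of_lt (Nat.sub_le _ _) k.isLt
        set k' : Fin M := ⟨(k:ℕ) - 1, hklt⟩ with hk'def
        have ha' : a = lam k' := by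
          rw [ha, prevEig, dif_neg (by omega)]
        have ha0' : 0 < a := ha' ▸ hpos k'
        set δ := min ((b - a) / 2) (a / ((M:ℝ) * C + 1)) with hδdef
        have hδ1 : δ ≤ (b - a) / 2 := min_le_left _ _
        have hδ2 : δ ≤ a / ((M:ℝ) * C + 1) := min_le_right _ _
        have hδ0 : 0 < δ := lt_min (by linarith) (div_pos ha0' (by linarith))
        refine ⟨a + δ, ⟨by linarith, by linarith⟩, ?_⟩
        have hsplit : ∑ j, lam j / (lam j - (a + δ))
            = lam k' / (lam k' - (a + δ)) +
              ∑ j ∈ Finset.univ.erase k', lam j / (lam j - (a + δ)) :=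
          (Finset.add_sum_erase _ _ (Finset.mem_univ k')).symm
        have htermk : lam k' / (lam k' - (a + δ)) = -(a / δ) := by
          rw [← ha']
          rw [show a - (a + δ) = -δ by ring, div_neg]
        -- every other term is at most C
        have hrest : ∀ j ∈ Finset.univ.erase k', lam j / (lam j - (a + δ)) ≤ C := by
          intro j _
          rcases hside j with h | h
          · have : lam j / (lam j - (a + δ)) < 0 :=
              div_neg_of_pos_of_neg (hpos j) (by linarith)
            linarith
          · have hd : 0 < lam j - (a + δ) := by linarith
            rw [div_le_iff₀ hd]
            have h1 : (C - 1) * ((b - a) / 2) ≤ (C - 1) * (lam j - (a + δ)) :=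
              mul_le_mul_of_nonneg_left (by linarith) (by linarith)
            have hexp : C * (lam j - (a + δ))
                = (lam j - (a + δ)) + (C - 1) * (lam j - (a + δ)) := by ring
            linarith
        have hsum_rest : ∑ j ∈ Finset.univ.erase k', lam j / (lam j - (a + δ))
            ≤ (M:ℝ) * C := by
          have h1 := Finset.sum_le_sum hrest
          rw [Finset.sum_const, Finset.card_erase_of_mem (Finset.mem_univ k'),
            Finset.card_univ, Fintype.card_fin, nsmul_eq_mul] at h1
          have hcard : ((M - 1 : ℕ) : ℝ) ≤ (M:ℝ) := by
            exact_mod_cast Nat.sub_le M 1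
          have h2 := mul_le_mul_of_nonneg_right hcard hC.le
          linarith
        have haδ : (M:ℝ) * C + 1 ≤ a / δ := by
          rw [le_div_iff₀ hδ0, mul_comm]
          rw [le_div_iff₀ (by linarith)] at hδ2
          exact hδ2
        have hS : ∑ j, lam j / (lam j - (a + δ)) < (N:ℝ) := by
          rw [hsplit, htermk]
          have : (0:ℝ) < N := hNR
          linarith
        show (1 / (N : ℝ)) * ∑ j, lam j / (lam j - (a + δ)) < 1
        rw [div_mul_eq_mul_div, one_mul]
        exact (div_lt_one hNR).mpr hS
    -- combine via the intermediate value theorem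
    have hxy : x < y := by
      by_contra hcon
      push_neg at hcon
      rcases eq_or_lt_of_le hcon with h | h
      · rw [h] at hfy; linarith
      · have := hmonoF hyI hxI h; linarith
    have hsub : Set.Icc x y ⊆ Set.Ioo a b := fun z hz =>
      ⟨lt_of_lt_of_le hxI.1 hz.1, lt_of_le_of_lt hz.2 hyI.2⟩
    have hIVT := intermediate_value_Icc hxy.le (hcont.mono hsub)
    obtain ⟨μ, hμmem, hμeq⟩ := hIVT ⟨hfx.le, hfy.le⟩
    refine ⟨μ, ⟨hsub hμmem, hμeq⟩, ?_⟩
    rintro μ' ⟨hμ'I, hμ'eq⟩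
    exact hmonoF.injOn hμ'I (hsub hμmem) (by rw [show f μ' = 1 from hμ'eq, hμeq])
  · -- all real solutions lie in one of the intervals
    intro μ hμne hμeq
    have hM0 : 0 < M := by
      rcases Nat.eq_zero_or_pos M with h | h
      · subst h; simp at hμeq
      · exact h
    have hne0 : (Finset.univ : Finset (Fin M)).Nonempty := ⟨⟨0, hM0⟩, Finset.mem_univ _⟩
    -- μ is below some eigenvalue
    have hex : ∃ j, μ < lam j := by
      by_contra h
      push_neg at h
      have hsum : ∑ j, lam j / (lam j - μ) < 0 := by
        have h0 : ∑ j, lam j / (lam j - μ) < ∑ _j : Fin M, (0:ℝ) := by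
          apply Finset.sum_lt_sum_of_nonempty hne0
          intro j _
          exact div_neg_of_pos_of_neg (hpos j)
            (by have := lt_of_le_of_ne (h j) (fun he => hμne j he.symm); linarith)
        simpa using h0
      have : (1 / (N:ℝ)) * ∑ j, lam j / (lam j - μ) < 0 :=
        mul_neg_of_pos_of_neg (by positivity) hsum
      linarith [hμeq]
    -- μ is positive
    have hμpos : 0 < μ := by
      by_contra h
      push_neg at h
      have hterm : ∀ j : Fin M, lam j / (lam j - μ) ≤ 1 := by
        intro j
        rw [div_le_one (by linarith [hpos j])]
        linarith
      have hsum : ∑ j, lam j / (lam j - μ) ≤ (M:ℝ) := by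
        calc ∑ j, lam j / (lam j - μ) ≤ ∑ _j : Fin M, (1:ℝ) :=
              Finset.sum_le_sum (fun j _ => hterm j)
          _ = (M:ℝ) := by simp
      have h1 : (1 / (N:ℝ)) * ∑ j, lam j / (lam j - μ) ≤ (1 / (N:ℝ)) * (M:ℝ) :=
        mul_le_mul_of_nonneg_left hsum (by positivity)
      have h2 : (1 / (N:ℝ)) * (M:ℝ) < 1 := by
        rw [div_mul_eq_mul_div, one_mul]
        exact (div_lt_one hNR).mpr (by exact_mod_cast hMN)
      linarith [hμeq]
    -- take the least eigenvalue above μ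
    set S := Finset.univ.filter (fun j : Fin M => μ < lam j) with hSdef
    have hSne : S.Nonempty := by
      obtain ⟨j, hj⟩ := hex
      exact ⟨j, Finset.mem_filter.mpr ⟨Finset.mem_univ _, hj⟩⟩
    set k := S.min' hSne with hkdef
    have hk : μ < lam k := (Finset.mem_filter.mp (S.min'_mem hSne)).2
    refine ⟨k, ?_, hk⟩
    rcases Nat.eq_zero_or_pos (k:ℕ) with h0 | h0
    · rw [prevEig, dif_pos h0]; exact hμpos
    · rw [prevEig, dif_neg (by omega)]
      set k' : Fin M := ⟨(k:ℕ) - 1, Nat.lt_of_le_of_lt (Nat.sub_le _ _) k.isLt⟩ with hk'def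
      have hk'not : k' ∉ S := by
        intro hmem
        have hle := S.min'_le k' hmem
        rw [← hkdef, Fin.le_def] at hle
        simp [hk'def] at hle
        omega
      have hle : lam k' ≤ μ := by
        by_contra hlt
        push_neg at hlt
        exact hk'not (Finset.mem_filter.mpr ⟨Finset.mem_univ _, hlt⟩)
      exact lt_of_le_of_ne hle (fun he => hμne k' he.symm)
end

section
/- Let 0 < λ₁ < … < λ_M be distinct positive reals, N > M, and let μ₁ < … < μ_M be the M real solutions of 1 = (1/N)∑_{j=1}^{M} λ_j/(λ_j − μ). Then for every k ∈ {1,…,M}: log N = ∑_{r=1}^{M} log( λ_k / |μ_r − λ_k| ) − ∑_{r≠k} log( λ_k / |λ_r − λ_k| ). -/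
/-- If `μ₁ < … < μ_M` are the `M` real solutions of `1 = (1/N) ∑ⱼ λⱼ/(λⱼ − μ)`, then for
every `k`, `log N = ∑ᵣ log(λₖ/|μᵣ − λₖ|) − ∑_{r≠k} log(λₖ/|λᵣ − λₖ|)`. -/
theorem log_N_identity (M N : ℕ) (hMN : M < N) (lam : Fin M → ℝ)
    (hpos : ∀ k, 0 < lam k) (hmono : StrictMono lam) (mu : Fin M → ℝ)
    (hloc : ∀ k, mu k ∈ Set.Ioo (prevEig lam k) (lam k))
    (heq : ∀ k, (1 / (N : ℝ)) * ∑ j, lam j / (lam j - mu k) = 1) :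
    ∀ k : Fin M, Real.log N =
      (∑ r, Real.log (lam k / |mu r - lam k|)) -
        ∑ r ∈ Finset.univ.erase k, Real.log (lam k / |lam r - lam k|) := by
  classical
  intro k
  have hM1 : 1 ≤ M := Nat.one_le_iff_ne_zero.mpr (by rintro rfl; exact k.elim0)
  have hNpos : 0 < (N : ℝ) := by
    have : 0 < N := lt_of_le_of_lt (Nat.zero_le M) hMN
    exact_mod_cast this
  -- interlacing consequences
  have hlt : ∀ r j : Fin M, (j : ℕ) < (r : ℕ) → lam j < mu r := by
    intro r j h
    have h0 : (r : ℕ) ≠ 0 := by omega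
    have hpe := (hloc r).1
    rw [prevEig, dif_neg h0] at hpe
    have hle : lam j ≤ lam ⟨(r : ℕ) - 1, Nat.lt_of_le_of_lt (Nat.sub_le _ _) r.isLt⟩ :=
      hmono.monotone (Fin.le_def.mpr (Nat.le_sub_one_of_lt h))
    exact lt_of_le_of_lt hle hpe
  have hgt : ∀ r j : Fin M, (r : ℕ) ≤ (j : ℕ) → mu r < lam j := by
    intro r j h
    exact lt_of_lt_of_le (hloc r).2 (hmono.monotone (Fin.le_def.mpr h))
  have hne : ∀ r j : Fin M, mu r ≠ lam j := by
    intro r j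
    rcases lt_or_ge ((j : ℕ)) ((r : ℕ)) with h | h
    · exact (hlt r j h).ne'
    · exact (hgt r j h).ne
  have hmuinj : Function.Injective mu := by
    have : StrictMono mu := by
      intro a b hab
      exact lt_trans (hloc a).2 (hlt b a (by exact_mod_cast hab))
    exact this.injective
  -- the polynomial identity
  set A : Polynomial ℝ := ∏ j, (Polynomial.X - Polynomial.C (lam j)) with hAdef
  set B : Polynomial ℝ := ∏ r, (Polynomial.X - Polynomial.C (mu r)) with hBdef
  set S : Polynomial ℝ := ∑ j, Polynomial.C (lam j) *
      ∏ i ∈ Finset.univ.erase j, (Polynomial.X - Polynomial.C (lam i)) with hSdef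
  have hA : A.Monic := Polynomial.monic_prod_of_monic _ _ fun j _ => Polynomial.monic_X_sub_C _
  have hB : B.Monic := Polynomial.monic_prod_of_monic _ _ fun j _ => Polynomial.monic_X_sub_C _
  have hAdeg : A.natDegree = M := by
    rw [hAdef, Polynomial.natDegree_prod_of_monic _ _ fun j _ => Polynomial.monic_X_sub_C _]
    simp [Polynomial.natDegree_X_sub_C]
  have hBdeg : B.natDegree = M := by
    rw [hBdef, Polynomial.natDegree_prod_of_monic _ _ fun j _ => Polynomial.monic_X_sub_C _]
    simp [Polynomial.natDegree_X_sub_C]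
  have hSdeg : S.natDegree ≤ M - 1 := by
    apply Polynomial.natDegree_sum_le_of_forall_le
    intro j _
    refine le_trans Polynomial.natDegree_mul_le ?_
    simp only [Polynomial.natDegree_C, zero_add]
    refine le_trans (Polynomial.natDegree_prod_le (Finset.univ.erase j)
      (fun i => Polynomial.X - Polynomial.C (lam i))) ?_
    simp [Polynomial.natDegree_X_sub_C, Finset.card_erase_of_mem]
  have hsum : ∀ r : Fin M, ∑ j, lam j / (lam j - mu r) = (N : ℝ) := by
    intro r
    have h := heq r
    field_simp at h
    linarith [h]
  have hpoly : A + Polynomial.C (1 / (N : ℝ)) * S = B := by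
    set D : Polynomial ℝ := A + Polynomial.C (1 / (N : ℝ)) * S - B with hDdef
    have hDeval : ∀ r : Fin M, D.eval (mu r) = 0 := by
      intro r
      have hAe : A.eval (mu r) = ∏ j, (mu r - lam j) := by
        simp [hAdef, Polynomial.eval_prod]
      have hSe : S.eval (mu r) = ∑ j, lam j * ∏ i ∈ Finset.univ.erase j, (mu r - lam i) := by
        simp [hSdef, Polynomial.eval_finset_sum, Polynomial.eval_prod]
      have hterm : ∀ j : Fin M, lam j * ∏ i ∈ Finset.univ.erase j, (mu r - lam i) =
          -(lam j / (lam j - mu r)) * ∏ i, (mu r - lam i) := by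
        intro j
        have hj : mu r - lam j ≠ 0 := sub_ne_zero.mpr (hne r j)
        rw [← Finset.prod_erase_mul Finset.univ _ (Finset.mem_univ j)]
        have hj' : lam j - mu r ≠ 0 := fun h => hj (by linarith [sub_eq_zero.mp h])
        field_simp
        ring
      have hSe' : S.eval (mu r) = -(N : ℝ) * ∏ i, (mu r - lam i) := by
        rw [hSe]
        calc ∑ j, lam j * ∏ i ∈ Finset.univ.erase j, (mu r - lam i)
            = ∑ j, -(lam j / (lam j - mu r)) * ∏ i, (mu r - lam i) := by
              exact Finset.sum_congr rfl fun j _ => hterm j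
          _ = (∑ j, -(lam j / (lam j - mu r))) * ∏ i, (mu r - lam i) := by
              rw [Finset.sum_mul]
          _ = -(N : ℝ) * ∏ i, (mu r - lam i) := by
              have hns : ∑ j, -(lam j / (lam j - mu r)) = -(N : ℝ) := by
                rw [Finset.sum_neg_distrib, hsum r]
              rw [hns]
      have hBe : B.eval (mu r) = 0 := by
        rw [hBdef]
        rw [Polynomial.eval_prod]
        exact Finset.prod_eq_zero (Finset.mem_univ r) (by simp)
      have hNne : (N : ℝ) ≠ 0 := ne_of_gt hNpos
      simp only [hDdef, Polynomial.eval_sub, Polynomial.eval_add, Polynomial.eval_mul,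
        Polynomial.eval_C, hAe, hSe', hBe]
      field_simp
      ring
    have hDdeg : D.natDegree < M := by
      rcases eq_or_ne D 0 with h0 | h0
      · simpa [h0] using (show 0 < M by omega)
      rw [Polynomial.natDegree_lt_iff_degree_lt h0]
      have h1 : (A - B).degree < (M : ℕ) := by
        have hd : A.degree = B.degree := by
          rw [Polynomial.degree_eq_natDegree hA.ne_zero,
            Polynomial.degree_eq_natDegree hB.ne_zero, hAdeg, hBdeg]
        have hlc : A.leadingCoeff = B.leadingCoeff := by
          rw [hA.leadingCoeff, hB.leadingCoeff]
        have := Polynomial.degree_sub_lt hd hA.ne_zero hlc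
        rwa [Polynomial.degree_eq_natDegree hA.ne_zero, hAdeg] at this
      have h2 : (Polynomial.C (1 / (N : ℝ)) * S).degree < (M : ℕ) := by
        apply lt_of_le_of_lt (Polynomial.degree_mul_le _ _)
        have hC : (Polynomial.C (1 / (N : ℝ))).degree ≤ 0 := Polynomial.degree_C_le
        have hS' : S.degree ≤ ((M - 1 : ℕ) : WithBot ℕ) :=
          le_trans Polynomial.degree_le_natDegree (by exact_mod_cast hSdeg)
        calc (Polynomial.C (1 / (N : ℝ))).degree + S.degree
            ≤ 0 + ((M - 1 : ℕ) : WithBot ℕ) := add_le_add hC hS'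
          _ = ((M - 1 : ℕ) : WithBot ℕ) := by rw [zero_add]
          _ < (M : ℕ) := by exact_mod_cast Nat.sub_lt (lt_of_lt_of_le Nat.zero_lt_one hM1) one_pos
      have : D = (A - B) + Polynomial.C (1 / (N : ℝ)) * S := by rw [hDdef]; ring
      rw [this]
      exact lt_of_le_of_lt (Polynomial.degree_add_le _ _) (max_lt h1 h2)
    have hD0 : D = 0 := by
      apply Polynomial.eq_zero_of_natDegree_lt_card_of_eval_eq_zero D hmuinj hDeval
      simpa using hDdeg
    have h' : A + Polynomial.C (1 / (N : ℝ)) * S - B = 0 := hD0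
    exact sub_eq_zero.mp h'
  -- evaluate at lam k
  have hkey : ∏ r, (lam k - mu r) =
      (1 / (N : ℝ)) * (lam k * ∏ i ∈ Finset.univ.erase k, (lam k - lam i)) := by
    have h := congrArg (Polynomial.eval (lam k)) hpoly
    have hAe : A.eval (lam k) = 0 := by
      rw [hAdef, Polynomial.eval_prod]
      exact Finset.prod_eq_zero (Finset.mem_univ k) (by simp)
    have hSe : S.eval (lam k) = lam k * ∏ i ∈ Finset.univ.erase k, (lam k - lam i) := by
      rw [hSdef]
      simp only [Polynomial.eval_finset_sum, Polynomial.eval_mul, Polynomial.eval_C,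
        Polynomial.eval_prod, Polynomial.eval_sub, Polynomial.eval_X]
      rw [Finset.sum_eq_single k]
      · intro j _ hjk
        refine mul_eq_zero_of_right _ (Finset.prod_eq_zero (Finset.mem_erase.mpr ⟨Ne.symm hjk, Finset.mem_univ k⟩) ?_)
        simp
      · intro h; exact absurd (Finset.mem_univ k) h
    have hBe : B.eval (lam k) = ∏ r, (lam k - mu r) := by
      simp [hBdef, Polynomial.eval_prod]
    simp only [Polynomial.eval_add, Polynomial.eval_mul, Polynomial.eval_C, hAe, hSe, hBe,
      zero_add] at h
    exact h.symm
  -- pass to absolute values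
  have habs : ∏ r, |mu r - lam k| =
      (lam k / N) * ∏ i ∈ Finset.univ.erase k, |lam i - lam k| := by
    have h1 : |∏ r, (lam k - mu r)| = ∏ r, |mu r - lam k| := by
      rw [Finset.abs_prod]
      exact Finset.prod_congr rfl fun r _ => (abs_sub_comm _ _)
    have h2 : |(1 / (N : ℝ)) * (lam k * ∏ i ∈ Finset.univ.erase k, (lam k - lam i))| =
        (lam k / N) * ∏ i ∈ Finset.univ.erase k, |lam i - lam k| := by
      rw [abs_mul, abs_mul, Finset.abs_prod]
      rw [abs_of_pos (one_div_pos.mpr hNpos), abs_of_pos (hpos k)]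
      rw [Finset.prod_congr rfl fun i _ => (abs_sub_comm (lam k) (lam i))]
      ring
    rw [← h1, hkey, h2]
  -- nonvanishing facts
  have hmune : ∀ r : Fin M, |mu r - lam k| ≠ 0 := fun r =>
    abs_ne_zero.mpr (sub_ne_zero.mpr (hne r k))
  have hlamne : ∀ i ∈ Finset.univ.erase k, |lam i - lam k| ≠ 0 := fun i hi =>
    abs_ne_zero.mpr (sub_ne_zero.mpr fun h => (Finset.mem_erase.mp hi).1 (hmono.injective h))
  -- take logs
  have hlog : ∑ r, Real.log |mu r - lam k| =
      Real.log (lam k) - Real.log N + ∑ i ∈ Finset.univ.erase k, Real.log |lam i - lam k| := by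
    have h := congrArg Real.log habs
    rw [Real.log_prod fun r _ => hmune r] at h
    rw [Real.log_mul (ne_of_gt (div_pos (hpos k) hNpos)) (Finset.prod_ne_zero_iff.mpr hlamne),
      Real.log_div (ne_of_gt (hpos k)) (ne_of_gt hNpos),
      Real.log_prod hlamne] at h
    linarith [h]
  -- final computation
  have e1 : ∀ r : Fin M, Real.log (lam k / |mu r - lam k|) =
      Real.log (lam k) - Real.log |mu r - lam k| :=
    fun r => Real.log_div (ne_of_gt (hpos k)) (hmune r)
  have e2 : ∀ i ∈ Finset.univ.erase k, Real.log (lam k / |lam i - lam k|) =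
      Real.log (lam k) - Real.log |lam i - lam k| :=
    fun i hi => Real.log_div (ne_of_gt (hpos k)) (hlamne i hi)
  rw [Finset.sum_congr rfl fun r _ => e1 r, Finset.sum_congr rfl e2]
  rw [Finset.sum_sub_distrib, Finset.sum_sub_distrib]
  have hsplit : ∑ _r : Fin M, Real.log (lam k) =
      Real.log (lam k) + ∑ _i ∈ Finset.univ.erase k, Real.log (lam k) := by
    rw [← Finset.add_sum_erase Finset.univ _ (Finset.mem_univ k)]
  rw [hsplit]
  linarith [hlog]
end
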